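/- arXiv:1203.0359 — 2 statements merged into one kernel-verified Lean document; each statement's English description precedes it below -/
import Mathlib

section
/- Let G be a finite group of the form G = H × K, and identify G/K with H. Then for every i ≥ 2, every f ∈ Ĥ^{−i}(G, ℤ), and every ψ ∈ Ĥ^{i}(H, ℤ), one has f ∪ Inf^G_H(ψ) = Cor^G_H(Rsd^G_H(f) ∪ ψ) in Ĥ^0(G, ℤ); that is, the residuation map Rsd^G_H : Ĥ^{−i}(G, ℤ) → Ĥ^{−i}(H, ℤ) and the inflation map Inf^G_H : Ĥ^{i}(H, ℤ) → Ĥ^{i}(G, ℤ) are adjoint with respect to the perfect cup-product pairings Ĥ^{−i} × Ĥ^{i} → Ĥ^{0}. -/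
/-- A homogeneous `n`-cochain of `G` with coefficients in the trivial `G`-module `ℤ`:
a function on `(n+1)`-tuples invariant under simultaneous left translation. -/
def IsHomogeneousCochain (G : Type*) [Group G] (n : ℕ) (c : (Fin (n + 1) → G) → ℤ) : Prop :=
  ∀ (g : G) (x : Fin (n + 1) → G), c (fun j => g * x j) = c x

/-- The differential on homogeneous cochains with coefficients in `ℤ`. -/
def cochainDiff (G : Type*) [Group G] (n : ℕ) (c : (Fin (n + 1) → G) → ℤ) :
    (Fin (n + 2) → G) → ℤ :=
  fun x => ∑ j : Fin (n + 2), (-1 : ℤ) ^ (j : ℕ) * c (x ∘ j.succAbove)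

/-- A negative-degree cochain of `G`, i.e. an element of `Hom_G(X_{-n}, ℤ)` for the
standard complete resolution `X`:  a function on `n`-tuples (the dual basis elements
`(s₁^*, …, s_n^*)`) invariant under simultaneous left translation. -/
def IsNegCochain (G : Type*) [Group G] (n : ℕ) (f : (Fin n → G) → ℤ) : Prop :=
  ∀ (g : G) (s : Fin n → G), f (fun j => g * s j) = f s

/-- The cocycle condition in degree `-(n+1)`:  the composite of `f ∈ Hom_G(X_{-(n+1)}, ℤ)`
with the differential `d : X_{-n} → X_{-(n+1)}`,
`d(s₁^*, …, s_n^*) = ∑_{j=1}^{n+1} ∑_{g ∈ G} (-1)^j (s₁^*, …, s_{j-1}^*, g^*, s_j^*, …, s_n^*)`,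
vanishes. -/
def IsNegCocycle (G : Type*) [Group G] [Fintype G] (n : ℕ) (f : (Fin (n + 1) → G) → ℤ) :
    Prop :=
  ∀ s : Fin n → G,
    ∑ t : Fin (n + 1), (-1 : ℤ) ^ ((t : ℕ) + 1) * ∑ g : G, f (Fin.insertNth t g s) = 0

/-- **Lemma 5.**  Let `G = H × K` be a finite group, and identify `G/K` with `H`.  For
`i ≥ 2` (here `i = m + 2`), the residuation map `Rsd^G_H : Ĥ^{-i}(G, ℤ) → Ĥ^{-i}(H, ℤ)`
and the inflation map `Inf^G_H : Ĥ^i(H, ℤ) → Ĥ^i(G, ℤ)` are adjoint for the cup-product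
pairings into `Ĥ^0`:  `f ∪ Inf^G_H ψ = Cor^G_H (Rsd^G_H f ∪ ψ)` in `Ĥ^0(G, ℤ) = ℤ/|G|ℤ`.
Stated on cocycle representatives via the explicit formulas for the cup product, the
residuation map `(Rsd f)(h₁^*, …, h_i^*) = ∑_{k_j ∈ K} f(h₁^*, (h₂k₂)^*, …, (h_i k_i)^*)`,
the inflation `(Inf ψ)(g₀, …, g_i) = ψ(π g₀, …, π g_i)` and the corestriction
`Cor : ℤ/|H|ℤ → ℤ/|G|ℤ`, `c ↦ [G : H]·c`, this reads: for every `g₀ = (h₀, k₀) ∈ G`,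
`∑_{s ∈ G^i} f(s₁, …, s_i) ψ(π s_i, …, π s₁, h₀)` is congruent modulo `|G|` to
`|K| · ∑_{h ∈ H^i} (∑_{k ∈ K^{i-1}} f((h₁,1), (h₂,k₂), …, (h_i,k_i))) ψ(h_i, …, h₁, h₀)`. -/
theorem residuation_inflation_adjoint
    (H K : Type*) [Group H] [Group K] [Fintype H] [Fintype K] (m : ℕ)
    (f : (Fin (m + 2) → H × K) → ℤ)
    (hfinv : IsNegCochain (H × K) (m + 2) f)
    (hfcoc : IsNegCocycle (H × K) (m + 1) f)
    (ψ : (Fin (m + 3) → H) → ℤ)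
    (hψinv : IsHomogeneousCochain H (m + 2) ψ)
    (hψcoc : cochainDiff H (m + 2) ψ = 0)
    (g₀ : H × K) :
    Int.ModEq (Fintype.card (H × K))
      (∑ s : Fin (m + 2) → H × K,
        f s * ψ (Fin.snoc (fun j => (s (Fin.rev j)).1) g₀.1))
      ((Fintype.card K) * ∑ h : Fin (m + 2) → H,
        (∑ k : Fin (m + 1) → K,
            f (fun j => (h j, Fin.cases 1 (fun t => k t) j))) *
          ψ (Fin.snoc (fun j => h (Fin.rev j)) g₀.1)) := by
  have hcons : ∀ (h : Fin (m + 2) → H) (k₀ : K) (k : Fin (m + 1) → K),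
      f (fun j => (h j, Fin.cons (α := fun _ => K) k₀ (fun t => k₀ * k t) j))
        = f (fun j => (h j, Fin.cons (α := fun _ => K) 1 k j)) := by
    intro h k₀ k
    have h1 := hfinv (1, k₀) (fun j => (h j, Fin.cons (α := fun _ => K) 1 k j))
    rw [← h1]
    congr 1
    funext j
    refine Fin.cases ?_ (fun t => ?_) j <;>
      simp [Prod.ext_iff, Fin.cons_zero, Fin.cons_succ]
  have key : ∀ h : Fin (m + 2) → H, (∑ k : Fin (m + 2) → K, f (fun j => (h j, k j)))
      = (Fintype.card K : ℤ) *
        ∑ k : Fin (m + 1) → K, f (fun j => (h j, Fin.cases 1 (fun t => k t) j)) := by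
    intro h
    rw [← Equiv.sum_comp (Fin.consEquiv (fun _ : Fin (m + 2) => K))
        (fun k => f (fun j => (h j, k j))), Fintype.sum_prod_type]
    have inner : ∀ k₀ : K,
        (∑ k : Fin (m + 1) → K, f (fun j => (h j, Fin.cons (α := fun _ => K) k₀ k j)))
          = ∑ k : Fin (m + 1) → K, f (fun j => (h j, Fin.cons (α := fun _ => K) 1 k j)) := by
      intro k₀
      rw [← Equiv.sum_comp (Equiv.piCongrRight fun _ : Fin (m + 1) => Equiv.mulLeft k₀)
          (fun k => f (fun j => (h j, Fin.cons (α := fun _ => K) k₀ k j)))]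
      exact Finset.sum_congr rfl fun k _ => hcons h k₀ k
    calc (∑ k₀ : K, ∑ k : Fin (m + 1) → K,
          f (fun j => (h j, (Fin.consEquiv fun _ => K) (k₀, k) j)))
        = ∑ _k₀ : K, ∑ k : Fin (m + 1) → K, f (fun j => (h j, Fin.cons (α := fun _ => K) 1 k j)) :=
          Finset.sum_congr rfl fun k₀ _ => inner k₀
      _ = (Fintype.card K : ℤ) *
          ∑ k : Fin (m + 1) → K, f (fun j => (h j, Fin.cases 1 (fun t => k t) j)) := by
          rw [Finset.sum_const, Finset.card_univ, nsmul_eq_mul]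
          rfl
  have main : (∑ s : Fin (m + 2) → H × K,
        f s * ψ (Fin.snoc (fun j => (s (Fin.rev j)).1) g₀.1))
      = ((Fintype.card K : ℤ) * ∑ h : Fin (m + 2) → H,
        (∑ k : Fin (m + 1) → K,
            f (fun j => (h j, Fin.cases 1 (fun t => k t) j))) *
          ψ (Fin.snoc (fun j => h (Fin.rev j)) g₀.1)) := by
    rw [← Equiv.sum_comp (Equiv.arrowProdEquivProdArrow (Fin (m + 2)) (fun _ => H) (fun _ => K)).symm
        (fun s => f s * ψ (Fin.snoc (fun j => (s (Fin.rev j)).1) g₀.1)),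
      Fintype.sum_prod_type, Finset.mul_sum]
    refine Finset.sum_congr rfl fun h _ => ?_
    simp only [Equiv.arrowProdEquivProdArrow, Equiv.coe_fn_symm_mk]
    rw [← Finset.sum_mul, key h, mul_assoc]
  exact main ▸ Int.ModEq.refl _
end

section
/- Let p be a prime, let L₁ and L₂ be separable extensions of degree p of a field K, and let E₁ and E₂ be their Galois closures over K. Then either the degree [E₁ ∩ E₂ : K] is prime to p, or E₁ = E₂. -/
open IntermediateField

/-- `E` is the Galois closure of `L` over `K`: the smallest Galois extension
of `K` containing `L`. -/
def IsGaloisClosure {K Ω : Type*} [Field K] [Field Ω] [Algebra K Ω]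
    (L E : IntermediateField K Ω) : Prop :=
  L ≤ E ∧ IsGalois K ↥E ∧
    ∀ E' : IntermediateField K Ω, L ≤ E' → IsGalois K ↥E' → E ≤ E'

open Polynomial Module

section AuxGroup

lemma aux_group {G : Type*} [Group G] [Finite G] {p : ℕ} (hp : p.Prime)
    {H N : Subgroup G} [hN : N.Normal] (hH : H.index = p) (hpN : p ∣ N.index)
    (hG : ¬ (p * p ∣ Nat.card G)) : N ≤ H := by
  have hJle : H ≤ H ⊔ N := le_sup_left
  have hNle : N ≤ H ⊔ N := le_sup_right
  have hJdvd : (H ⊔ N).index ∣ p := hH ▸ Subgroup.index_dvd_of_le hJle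
  have h1 : N.relIndex (H ⊔ N) * (H ⊔ N).index = N.index :=
    Subgroup.relIndex_mul_index hNle
  have hpH : ¬ p ∣ Nat.card H := by
    intro h
    apply hG
    rw [← Subgroup.index_mul_card H, hH]
    exact mul_dvd_mul (dvd_refl p) h
  have hrel : N.relIndex (H ⊔ N) ∣ Nat.card H := by
    rw [Subgroup.relIndex_sup_right]
    exact Subgroup.index_dvd_card (N.subgroupOf H)
  have hpJ : p ∣ (H ⊔ N).index := by
    rcases (Nat.Prime.dvd_mul hp).mp (h1 ▸ hpN) with h | h
    · exact absurd (h.trans hrel) hpH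
    · exact h
  have hJp : (H ⊔ N).index = p := Nat.dvd_antisymm hJdvd hpJ
  have h2 : H.relIndex (H ⊔ N) * (H ⊔ N).index = H.index :=
    Subgroup.relIndex_mul_index hJle
  rw [hJp, hH] at h2
  have h3 : H.relIndex (H ⊔ N) = 1 :=
    Nat.eq_of_mul_eq_mul_right hp.pos (h2.trans (one_mul p).symm)
  exact hNle.trans (Subgroup.relIndex_eq_one.mp h3)

lemma index_fixingSubgroup {K E : Type*} [Field K] [Field E] [Algebra K E]
    [FiniteDimensional K E] [IsGalois K E] (M : IntermediateField K E) :
    M.fixingSubgroup.index = finrank K ↥M := by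
  classical
  haveI : FiniteDimensional (↥M) E := FiniteDimensional.right K (↥M) E
  have h2 : Nat.card M.fixingSubgroup = finrank (↥M) E := by
    rw [← IntermediateField.finrank_fixedField_eq_card,
      IsGalois.fixedField_fixingSubgroup]
  have h1 : M.fixingSubgroup.index * finrank (↥M) E = Nat.card (E ≃ₐ[K] E) := by
    rw [← h2]; exact Subgroup.index_mul_card _
  have h3 : Nat.card (E ≃ₐ[K] E) = finrank K E := by
    exact IsGalois.card_aut_eq_finrank K E
  have h4 : finrank K (↥M) * finrank (↥M) E = finrank K E :=
    finrank_mul_finrank K (↥M) E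
  have h5 : 0 < finrank (↥M) E := finrank_pos
  exact Nat.eq_of_mul_eq_mul_right h5 (by rw [h1, h3, ← h4])

end AuxGroup

section AuxField

variable {K Ω : Type*} [Field K] [Field Ω] [Algebra K Ω]

lemma map_comap_val {E M : IntermediateField K Ω} (h : M ≤ E) :
    (M.comap E.val).map E.val = M := by
  apply le_antisymm
  · rw [← SetLike.coe_subset_coe, IntermediateField.coe_map]
    rintro _ ⟨x, hx, rfl⟩
    exact hx
  · intro y hy
    rw [← SetLike.mem_coe, IntermediateField.coe_map]
    exact ⟨⟨y, h hy⟩, hy, rfl⟩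

noncomputable def comapEquiv {E M : IntermediateField K Ω} (h : M ≤ E) :
    ↥(M.comap E.val) ≃ₐ[K] ↥M :=
  (IntermediateField.equivMap (M.comap E.val) E.val).trans
    (IntermediateField.equivOfEq (map_comap_val h))

lemma finrank_comap_val {E M : IntermediateField K Ω} (h : M ≤ E) :
    finrank K ↥(M.comap E.val) = finrank K ↥M :=
  (comapEquiv h).toLinearEquiv.finrank_eq

lemma aux_main [IsSepClosure K Ω]
    {p : ℕ} (hp : p.Prime) (L E F : IntermediateField K Ω) [Algebra.IsSeparable K ↥L]
    (hd : finrank K ↥L = p) (hE : IsGaloisClosure L E) (hFE : F ≤ E)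
    (hgal : IsGalois K ↥F) (hdvd : p ∣ finrank K ↥F) : E ≤ F := by
  obtain ⟨hLE, hEgal, hmin⟩ := hE
  haveI := hEgal
  haveI := hgal
  haveI : IsSepClosed Ω := IsSepClosure.sep_closed K
  haveI : FiniteDimensional K ↥L := FiniteDimensional.of_finrank_pos (hd ▸ hp.pos)
  obtain ⟨α, hα⟩ := Field.exists_primitive_element K ↥L
  set a : Ω := (α : Ω) with ha
  have haL : a ∈ L := α.2
  have hint : IsIntegral K a := IsIntegral.map L.val (IsIntegral.of_finite K α)
  have hLa : L = K⟮a⟯ := by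
    have h1 : (K⟮α⟯.map L.val) = (⊤ : IntermediateField K ↥L).map L.val :=
      congrArg _ hα
    rw [IntermediateField.adjoin_map, Set.image_singleton,
      ← AlgHom.fieldRange_eq_map, IntermediateField.fieldRange_val] at h1
    exact h1.symm
  set f := minpoly K a with hf
  have hsep : f.Separable := Algebra.IsSeparable.isSeparable K a
  have hfdeg : f.natDegree = p := by
    rw [← hd, hLa, IntermediateField.adjoin.finrank hint]
  have hsplΩ : (f.map (algebraMap K Ω)).Splits := IsSepClosed.splits_codomain f hsep
  set M := IntermediateField.adjoin K (f.rootSet Ω) with hM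
  haveI hMspl : IsSplittingField K ↥M f :=
    IntermediateField.adjoin_rootSet_isSplittingField hsplΩ
  haveI : FiniteDimensional K ↥M := IsSplittingField.finiteDimensional ↥M f
  haveI : Normal K ↥M := Normal.of_isSplittingField f
  haveI : Algebra.IsSeparable K ↥M :=
    Algebra.isSeparable_tower_bot_of_isSeparable K ↥M Ω
  have hMgal : IsGalois K ↥M := ⟨⟩
  have haM : a ∈ M := IntermediateField.subset_adjoin K _
    (by rw [Polynomial.mem_rootSet]; exact ⟨minpoly.ne_zero hint, minpoly.aeval K a⟩)
  have hLM : L ≤ M := by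
    rw [hLa]; exact IntermediateField.adjoin_le_iff.mpr (Set.singleton_subset_iff.mpr haM)
  have haE : a ∈ E := hLE haL
  have hsplE : (f.map (algebraMap K ↥E)).Splits := by
    have h1 := hEgal.to_normal.splits (⟨a, haE⟩ : ↥E)
    have h2 : f = minpoly K (⟨a, haE⟩ : ↥E) :=
      minpoly.algHom_eq E.val (fun _ _ hxy => Subtype.ext hxy) ⟨a, haE⟩
    rw [h2]; exact h1
  have hME : M ≤ E := IntermediateField.adjoin_le_iff.mpr
    (fun x hx => (IntermediateField.splits_iff_mem hsplΩ).mp hsplE x hx)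
  have hEM : E = M := le_antisymm (hmin M hLM hMgal) hME
  haveI : FiniteDimensional K ↥E := by rw [hEM]; infer_instance
  have hcard : finrank K ↥E ∣ Nat.factorial p := by
    classical
    haveI : Fact ((f.map (algebraMap K Ω)).Splits) := ⟨hsplΩ⟩
    have h1 : finrank K ↥E = finrank K f.SplittingField := by
      rw [hEM]
      exact (IsSplittingField.algEquiv ↥M f).toLinearEquiv.finrank_eq
    have h2 : Nat.card f.Gal = finrank K f.SplittingField :=
      Polynomial.Gal.card_of_separable hsep
    have h3 : Nat.card f.Gal ∣ Nat.card (Equiv.Perm (f.rootSet Ω)) :=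
      Subgroup.card_dvd_of_injective _ (Polynomial.Gal.galActionHom_injective f Ω)
    rw [Nat.card_eq_fintype_card, Nat.card_eq_fintype_card, Fintype.card_perm,
      card_rootSet_eq_natDegree hsep hsplΩ, hfdeg, ← Nat.card_eq_fintype_card, h2] at h3
    rw [h1]; exact h3
  have hpp : ¬ (p * p ∣ finrank K ↥E) := by
    intro h
    have h2 := h.trans hcard
    rw [← Nat.mul_factorial_pred hp.ne_zero] at h2
    have h4 : p ∣ Nat.factorial (p - 1) :=
      (mul_dvd_mul_iff_left (hp.ne_zero : p ≠ 0)).mp h2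
    have h5 := (Nat.Prime.dvd_factorial hp).mp h4
    have := hp.pos
    omega
  haveI : FiniteDimensional K ↥(F.comap E.val) := inferInstance
  haveI : FiniteDimensional K ↥F := Module.Finite.equiv (comapEquiv hFE).toLinearEquiv
  set L' := L.comap E.val with hL'
  set F' := F.comap E.val with hF'
  haveI hF'gal : IsGalois K ↥F' := IsGalois.of_algEquiv (comapEquiv hFE).symm
  haveI : Finite (↥E ≃ₐ[K] ↥E) := Finite.of_fintype _
  have hNH : F'.fixingSubgroup ≤ L'.fixingSubgroup := by
    apply aux_group hp
    · rw [index_fixingSubgroup, hL', finrank_comap_val hLE, hd]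
    · rw [index_fixingSubgroup, hF', finrank_comap_val hFE]; exact hdvd
    · rw [IsGalois.card_aut_eq_finrank]; exact hpp
  have hL'F' : L' ≤ F' := by
    have h1 : IntermediateField.fixedField L'.fixingSubgroup = L' :=
      IsGalois.fixedField_fixingSubgroup L'
    have h2 : IntermediateField.fixedField F'.fixingSubgroup = F' :=
      IsGalois.fixedField_fixingSubgroup F'
    rw [← h1, ← h2]
    exact fun x hx σ => hx ⟨σ.1, hNH σ.2⟩
  have hLF : L ≤ F := by
    intro x hx
    have hxE : (⟨x, hLE hx⟩ : ↥E) ∈ L' := hx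
    exact hL'F' hxE
  exact hmin F hLF hgal

end AuxField

/-- Let `p` be a prime, let `L₁, L₂` be separable extensions of degree `p` of a field
`K`, and let `E₁, E₂` be their Galois closures over `K`.  Then either `[E₁ ∩ E₂ : K]`
is prime to `p`, or `E₁ = E₂`. -/
theorem galois_closures_coprime_or_eq
    (K Ω : Type*) [Field K] [Field Ω] [Algebra K Ω] [IsSepClosure K Ω]
    (p : ℕ) (hp : p.Prime)
    (L₁ L₂ E₁ E₂ : IntermediateField K Ω)
    [Algebra.IsSeparable K ↥L₁] [Algebra.IsSeparable K ↥L₂]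
    (hd₁ : Module.finrank K ↥L₁ = p) (hd₂ : Module.finrank K ↥L₂ = p)
    (hE₁ : IsGaloisClosure L₁ E₁) (hE₂ : IsGaloisClosure L₂ E₂) :
    Nat.Coprime (Module.finrank K ↥(E₁ ⊓ E₂)) p ∨ E₁ = E₂ := by
  by_cases h : Nat.Coprime (Module.finrank K ↥(E₁ ⊓ E₂)) p
  · exact Or.inl h
  right
  have hdvd : p ∣ Module.finrank K ↥(E₁ ⊓ E₂) := by
    by_contra h'
    exact h (Nat.Coprime.symm ((Nat.Prime.coprime_iff_not_dvd hp).mpr h'))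
  haveI : IsGalois K ↥E₁ := hE₁.2.1
  haveI : IsGalois K ↥E₂ := hE₂.2.1
  have hgal : IsGalois K ↥(E₁ ⊓ E₂) :=
    { to_isSeparable := Algebra.isSeparable_tower_bot_of_isSeparable K _ Ω
      to_normal := inferInstance }
  have h1 : E₁ ≤ E₁ ⊓ E₂ := aux_main hp L₁ E₁ (E₁ ⊓ E₂) hd₁ hE₁ inf_le_left hgal hdvd
  have h2 : E₂ ≤ E₁ ⊓ E₂ := aux_main hp L₂ E₂ (E₁ ⊓ E₂) hd₂ hE₂ inf_le_right hgal hdvd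
  exact le_antisymm (h1.trans inf_le_right) (h2.trans inf_le_left)
end
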